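/- Let H be a complex Hilbert space and let κ : ℝ → (H →L[ℂ] H) be a 1-periodic strongly continuous one-parameter group of unitary operators on H. Let Z : H →L[ℂ] H be a bounded linear operator, let φ belong to the invariant subspace V₀ = {φ ∈ H : κ_t φ = φ for all t ∈ ℝ}, and set ψ = Zφ. Assume that the map t ↦ κ_{-t} ψ is differentiable on ℝ with derivative bounded in norm by a constant M ≥ 0. Then the associated invariant operator Z̃φ = ∫_{t ∈ [0,1]} κ_{-t}(Z(κ_t φ)) dt satisfies ‖Z̃φ − Zφ‖ ≤ M/2. -/

import Mathlib

open MeasureTheory Set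

/-- For `φ` in the invariant subspace `V₀` and `ψ = Z φ`, if
`t ↦ κ_{-t} ψ` is differentiable on `ℝ` with derivative bounded in norm by `M ≥ 0`,
then the associated invariant operator satisfies `‖Z̃ φ − Z φ‖ ≤ M / 2`. -/
theorem associated_invariant_operator_estimate
    {H : Type*} [NormedAddCommGroup H] [InnerProductSpace ℂ H] [CompleteSpace H]
    (κ : ℝ → (H →L[ℂ] H))
    (hκ0 : κ 0 = ContinuousLinearMap.id ℂ H)
    (hκadd : ∀ s t : ℝ, κ (s + t) = (κ s).comp (κ t))
    (hκper : ∀ t : ℝ, κ (t + 1) = κ t)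
    (hκiso : ∀ (t : ℝ) (x : H), ‖κ t x‖ = ‖x‖)
    (hκsurj : ∀ t : ℝ, Function.Surjective (κ t))
    (hκcont : ∀ φ : H, Continuous fun t : ℝ => κ t φ)
    (Z : H →L[ℂ] H) (φ : H)
    (hφ : ∀ t : ℝ, κ t φ = φ)
    (M : ℝ) (hM : 0 ≤ M)
    (f' : ℝ → H)
    (hderiv : ∀ t : ℝ, HasDerivAt (fun s : ℝ => κ (-s) (Z φ)) (f' t) t)
    (hbound : ∀ t : ℝ, ‖f' t‖ ≤ M) :
    ‖(∫ t in Set.Icc (0:ℝ) 1, κ (-t) (Z (κ t φ))) - Z φ‖ ≤ M / 2 := by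
  set g : ℝ → H := fun t => κ (-t) (Z φ) with hg
  have hg0 : g 0 = Z φ := by simp [hg, hκ0]
  have hgint : (fun t => κ (-t) (Z (κ t φ))) = g := by
    funext t; simp [hg, hφ t]
  have hgcont : Continuous g := continuous_iff_continuousAt.2 fun x => (hderiv x).continuousAt
  -- pointwise bound via mean value inequality
  have hpt : ∀ t ∈ Icc (0:ℝ) 1, ‖g t - Z φ‖ ≤ M * t := by
    intro t ht
    have := Convex.norm_image_sub_le_of_norm_hasDerivWithin_le
      (f := g) (f' := f') (C := M)
      (fun x _ => (hderiv x).hasDerivWithinAt)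
      (fun x _ => hbound x) (convex_univ) (mem_univ (0:ℝ)) (mem_univ t)
    rw [hg0] at this
    calc ‖g t - Z φ‖ ≤ M * ‖t - 0‖ := this
      _ = M * t := by rw [sub_zero, Real.norm_eq_abs, abs_of_nonneg ht.1]
  have hInt : IntegrableOn g (Icc (0:ℝ) 1) := hgcont.integrableOn_Icc
  have hvol : (volume (Icc (0:ℝ) 1)).toReal = 1 := by simp
  have hsplit : (∫ t in Icc (0:ℝ) 1, g t) - Z φ
      = ∫ t in Icc (0:ℝ) 1, (g t - Z φ) := by
    rw [integral_sub hInt (integrableOn_const (by simp) (by simp))]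
    simp [hvol]
  rw [hgint, hsplit]
  have hMint : IntegrableOn (fun t : ℝ => M * t) (Icc (0:ℝ) 1) :=
    (continuous_const.mul continuous_id).integrableOn_Icc
  calc ‖∫ t in Icc (0:ℝ) 1, (g t - Z φ)‖
      ≤ ∫ t in Icc (0:ℝ) 1, M * t := by
        refine norm_integral_le_of_norm_le hMint ?_
        filter_upwards [ae_restrict_mem measurableSet_Icc] with t ht using hpt t ht
    _ = M / 2 := by
        rw [integral_Icc_eq_integral_Ioc, ← intervalIntegral.integral_of_le zero_le_one]
        rw [intervalIntegral.integral_const_mul, integral_id]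
        norm_num
        ring
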